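/- Let N, M₁, M₂ be positive integers with M₁ ≤ M₂ and M₁ < N, let n be an integer with 0 ≤ n ≤ M₁, and let z_1, …, z_{M₁}, w_1, …, w_{M₂} ∈ ℂ be such that the z_i are pairwise distinct, the w_k are pairwise distinct, and z_i ≠ w_k for all i, k. Then Σ_{i=1}^{M₁} Σ_{k=1}^{M₂} (z_i/(z_i − w_k)) · [ w_k ∏_{j≠i} ((z_j − w_k)/(z_j − z_i)) · ∏_{l≠k} ((w_l − z_i)/(w_l − w_k)) − z_i ] · Σ_{γ=1}^{N} η̄_γ^{n} ∏_{j≠i} (η_γ − z_j) = [ −n(n+1)/2 + M₁(M₁+1)/2 ] · Σ_{γ=1}^{N} η̄_γ^{n} ∏_{i=1}^{M₁} (η_γ − z_i). -/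

import Mathlib

open Finset

/-- The `N`-th roots of unity: `η_γ = exp(2πiγ/N)` for `γ = 1, …, N`. -/
noncomputable def η (N : ℕ) (γ : Fin N) : ℂ :=
  Complex.exp (2 * Real.pi * Complex.I * ((γ : ℕ) + 1) / N)

open Polynomial

lemma eta_pow (N : ℕ) (γ : Fin N) :
    η N γ = Complex.exp (2 * Real.pi * Complex.I / N) ^ ((γ : ℕ) + 1) := by
  rw [← Complex.exp_nat_mul, η]
  congr 1
  push_cast
  ring

lemma conj_eta (N : ℕ) (γ : Fin N) : (starRingEnd ℂ) (η N γ) = (η N γ)⁻¹ := by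
  rw [η, ← Complex.exp_conj, ← Complex.exp_neg]
  congr 1
  simp [map_div₀, Complex.conj_I, map_ofNat, ← Complex.ofReal_natCast]
  ring

lemma orth (N : ℕ) (hN : 0 < N) (m n : ℕ) (hm : m < N) (hn : n < N) :
    ∑ γ : Fin N, ((starRingEnd ℂ) (η N γ)) ^ n * (η N γ) ^ m
      = if m = n then (N : ℂ) else 0 := by
  have hprim := Complex.isPrimitiveRoot_exp N hN.ne'
  set ζ := Complex.exp (2 * Real.pi * Complex.I / N) with hζ
  have hζ0 : ζ ≠ 0 := Complex.exp_ne_zero _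
  have hζN : ζ ^ N = 1 := hprim.pow_eq_one
  set ξ := ζ ^ m * (ζ ^ n)⁻¹ with hξ
  have key : ∀ γ : Fin N, ((starRingEnd ℂ) (η N γ)) ^ n * (η N γ) ^ m
      = ξ ^ ((γ : ℕ) + 1) := by
    intro γ
    rw [conj_eta, eta_pow N]
    rw [hξ, mul_pow, inv_pow, ← pow_mul, ← pow_mul, ← pow_mul, inv_pow, ← pow_mul]
    rw [mul_comm ((γ : ℕ) + 1) n, mul_comm ((γ : ℕ) + 1) m]
    ring
  simp_rw [key]
  have hξN : ξ ^ N = 1 := by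
    rw [hξ, mul_pow, inv_pow, ← pow_mul, ← pow_mul, mul_comm m N, mul_comm n N,
      pow_mul, pow_mul, hζN, one_pow, one_pow, inv_one, mul_one]
  by_cases h : m = n
  · subst h
    simp_rw [hξ, mul_inv_cancel₀ (pow_ne_zero _ hζ0), one_pow]
    simp
  · rw [if_neg h]
    have hξ1 : ξ ≠ 1 := by
      intro hc
      apply h
      refine hprim.pow_inj hm hn ?_
      field_simp [hξ] at hc
      rw [hξ, mul_inv_eq_one₀ (pow_ne_zero _ hζ0)] at hc
      exact hc
    have step : ∑ γ : Fin N, ξ ^ ((γ : ℕ) + 1) = ξ * ∑ γ ∈ range N, ξ ^ γ := by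
      rw [mul_sum, ← Fin.sum_univ_eq_sum_range (fun i => ξ * ξ ^ i) N]
      exact Finset.sum_congr rfl fun γ _ => by rw [pow_succ, mul_comm]
    rw [step, geom_sum_eq hξ1, hξN]
    simp

lemma proj (N : ℕ) (hN : 0 < N) (n : ℕ) (hn : n < N) (p : Polynomial ℂ)
    (hdeg : p.natDegree < N) :
    ∑ γ : Fin N, ((starRingEnd ℂ) (η N γ)) ^ n * p.eval (η N γ)
      = (N : ℂ) * p.coeff n := by
  have : ∀ γ : Fin N, ((starRingEnd ℂ) (η N γ)) ^ n * p.eval (η N γ)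
      = ∑ m ∈ range N, p.coeff m * (((starRingEnd ℂ) (η N γ)) ^ n * (η N γ) ^ m) := by
    intro γ
    rw [Polynomial.eval_eq_sum_range' hdeg, Finset.mul_sum]
    exact Finset.sum_congr rfl fun m _ => by ring
  simp_rw [this]
  rw [Finset.sum_comm]
  have : ∀ m ∈ range N, ∑ γ : Fin N, p.coeff m * (((starRingEnd ℂ) (η N γ)) ^ n * (η N γ) ^ m)
      = p.coeff m * (if m = n then (N : ℂ) else 0) := by
    intro m hm
    rw [← Finset.mul_sum, orth N hN m n (mem_range.mp hm) hn]
  rw [Finset.sum_congr rfl this]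
  simp_rw [mul_ite, mul_zero]
  rw [Finset.sum_ite_eq' (range N) n (fun m => p.coeff m * (N:ℂ))]
  simp [mem_range.mpr hn, mul_comm]

lemma derivative_finset_prod {ι : Type*} [DecidableEq ι] (s : Finset ι) (f : ι → Polynomial ℂ) :
    derivative (∏ i ∈ s, f i) = ∑ i ∈ s, (∏ j ∈ s.erase i, f j) * derivative (f i) := by
  induction s using Finset.induction_on with
  | empty => simp
  | insert _ _ hx ih =>
    rename_i a s
    rw [Finset.prod_insert hx, derivative_mul, ih, Finset.mul_sum, Finset.sum_insert hx,
      Finset.erase_insert hx]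
    congr 1
    · rw [mul_comm]
    · refine Finset.sum_congr rfl fun i hi => ?_
      rw [Finset.erase_insert_of_ne (by rintro rfl; exact hx hi), Finset.prod_insert
        (fun h => hx (Finset.mem_of_mem_erase h))]
      ring

lemma eval_basis_prod {M : ℕ} (w : Fin M → ℂ) (k : Fin M) (a : ℂ) :
    (Lagrange.basis univ w k).eval a = ∏ l ∈ univ.erase k, ((a - w l) / (w k - w l)) := by
  rw [Lagrange.basis, Polynomial.eval_prod]
  refine Finset.prod_congr rfl fun l _ => ?_
  rw [Lagrange.basisDivisor, eval_mul, eval_C, eval_sub, eval_X, eval_C, div_eq_mul_inv, mul_comm]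

lemma lagrange_sum {M : ℕ} (hM : 0 < M) (w : Fin M → ℂ) (hw : Function.Injective w)
    (p : Polynomial ℂ) (hdeg : p.degree < M) (a : ℂ) :
    ∑ k : Fin M, p.eval (w k) * ∏ l ∈ univ.erase k, ((a - w l) / (w k - w l)) = p.eval a := by
  have hinj : Set.InjOn w (univ : Finset (Fin M)) := hw.injOn
  have h := Lagrange.eq_interpolate hinj (by simpa using hdeg)
  conv_rhs => rw [h]
  rw [Lagrange.interpolate_apply, Polynomial.eval_finset_sum]
  refine Finset.sum_congr rfl fun k _ => ?_
  rw [eval_mul, eval_C, eval_basis_prod]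

lemma basis_sub_one_fac {M : ℕ} (w : Fin M → ℂ) (hw : Function.Injective w) (k : Fin M) :
    Lagrange.basis univ w k - 1
      = (X - C (w k)) * ((Lagrange.basis univ w k - 1) /ₘ (X - C (w k))) := by
  have h := Polynomial.modByMonic_add_div (Lagrange.basis univ w k - 1) (X - C (w k))
  rw [Polynomial.modByMonic_X_sub_C_eq_C_eval, eval_sub,
    Lagrange.eval_basis_self hw.injOn (mem_univ k), eval_one, sub_self, map_zero, zero_add] at h
  exact h.symm

lemma lem2 {M : ℕ} (hM : 0 < M) (w : Fin M → ℂ) (hw : Function.Injective w)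
    (a : ℂ) (ha : ∀ k, a ≠ w k) :
    ∑ k : Fin M, ((∏ l ∈ univ.erase k, ((a - w l) / (w k - w l))) - 1) / (a - w k) = 0 := by
  set h : Fin M → Polynomial ℂ :=
    fun k => (Lagrange.basis univ w k - 1) /ₘ (X - C (w k)) with hh
  have hfac : ∀ k, Lagrange.basis univ w k - 1 = (X - C (w k)) * h k :=
    fun k => basis_sub_one_fac w hw k
  -- evaluations at nodes
  have heval_ne : ∀ k m : Fin M, k ≠ m → (h k).eval (w m) = -(w m - w k)⁻¹ := by
    intro k m hkm
    have h1 := congrArg (Polynomial.eval (w m)) (hfac k)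
    rw [eval_sub, eval_one, Lagrange.eval_basis_of_ne hkm (mem_univ m), eval_mul, eval_sub,
      eval_X, eval_C] at h1
    have hne : w m - w k ≠ 0 := sub_ne_zero.mpr (fun hc => hkm (hw hc).symm)
    field_simp at h1 ⊢
    linear_combination -h1
  have heval_self : ∀ m : Fin M, (h m).eval (w m) = ∑ l ∈ univ.erase m, (w m - w l)⁻¹ := by
    intro m
    have h1 := congrArg Polynomial.derivative (hfac m)
    rw [derivative_sub, derivative_one, sub_zero, derivative_mul, derivative_sub,
      derivative_X, derivative_C, sub_zero, one_mul] at h1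
    have h2 := congrArg (Polynomial.eval (w m)) h1
    rw [eval_add, eval_mul, eval_sub, eval_X, eval_C, sub_self, zero_mul, add_zero] at h2
    rw [← h2]
    -- derivative of basis evaluated at its own node
    rw [Lagrange.basis, derivative_finset_prod, Polynomial.eval_finset_sum]
    refine Finset.sum_congr rfl fun b hb => ?_
    have hbm : w m ≠ w b := fun hc => (Finset.ne_of_mem_erase hb) (hw hc).symm
    rw [eval_mul, Polynomial.eval_prod]
    have : ∀ j ∈ (univ.erase m).erase b, (Lagrange.basisDivisor (w m) (w j)).eval (w m) = 1 := by
      intro j hj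
      exact Lagrange.eval_basisDivisor_left_of_ne
        (fun hc => (Finset.ne_of_mem_erase (Finset.mem_of_mem_erase hj)) (hw hc).symm)
    rw [Finset.prod_congr rfl this, Finset.prod_const_one, one_mul, Lagrange.basisDivisor,
      derivative_mul, derivative_C, zero_mul, derivative_sub, derivative_X, derivative_C,
      sub_zero, mul_one, zero_add, eval_C]
  have hsum : ∑ k : Fin M, h k = 0 := by
    apply Polynomial.eq_zero_of_degree_lt_of_eval_finset_eq_zero (univ.image w)
    · have hcard : (univ.image w).card = M := by
        rw [Finset.card_image_of_injective _ hw, card_univ, Fintype.card_fin]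
      rw [hcard]
      refine lt_of_le_of_lt (Polynomial.degree_sum_le _ _) ?_
      rw [Finset.sup_lt_iff (by exact_mod_cast WithBot.bot_lt_coe M)]
      intro k _
      refine lt_of_le_of_lt (Polynomial.degree_le_natDegree) ?_
      have hb1 : (Lagrange.basis univ w k - 1).natDegree ≤ M - 1 := by
        refine le_trans (Polynomial.natDegree_sub_le _ _) ?_
        rw [Lagrange.natDegree_basis hw.injOn (mem_univ k)]
        simp
      have : (h k).natDegree ≤ M - 1 := by
        rw [hh]
        simp only
        rw [Polynomial.natDegree_divByMonic _ (monic_X_sub_C (w k)), natDegree_X_sub_C]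
        omega
      exact_mod_cast lt_of_le_of_lt (Nat.cast_le.mpr this)
        (Nat.cast_lt.mpr (Nat.sub_lt hM one_pos))
    · intro x hx
      obtain ⟨m, _, rfl⟩ := Finset.mem_image.mp hx
      rw [Polynomial.eval_finset_sum]
      rw [← Finset.add_sum_erase _ _ (mem_univ m), heval_self m]
      rw [Finset.sum_congr rfl (fun k hk => heval_ne k m (Finset.ne_of_mem_erase hk))]
      rw [Finset.sum_neg_distrib]
      ring
  have h0 := congrArg (Polynomial.eval a) hsum
  rw [Polynomial.eval_finset_sum, eval_zero] at h0
  rw [← h0]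
  refine Finset.sum_congr rfl fun k _ => ?_
  have hak : a - w k ≠ 0 := sub_ne_zero.mpr (ha k)
  have h1 := congrArg (Polynomial.eval a) (hfac k)
  rw [eval_sub, eval_one, eval_mul, eval_sub, eval_X, eval_C, eval_basis_prod] at h1
  rw [div_eq_iff hak]
  linear_combination h1

lemma key1_alg : ∀ (B qk Sa u v : ℂ), u - v ≠ 0 → Sa ≠ 0 →
    u / (u - v) * ((u * Sa + (v - u) * qk) / Sa * B - u)
      = u ^ 2 * ((B - 1) / (u - v)) - u / Sa * (qk * B) := by
  intro B qk Sa u v huv hSa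
  field_simp
  ring

lemma key1 {M₁ M₂ : ℕ} (hM₁ : 0 < M₁) (hM₂ : 0 < M₂) (h12 : M₁ ≤ M₂)
    (z : Fin M₁ → ℂ) (hz : Function.Injective z) (w : Fin M₂ → ℂ) (hw : Function.Injective w)
    (hzw : ∀ i k, z i ≠ w k) (i : Fin M₁) :
    ∑ k : Fin M₂, z i / (z i - w k) *
        (w k * (∏ j ∈ univ.erase i, (z j - w k) / (z j - z i)) *
            (∏ l ∈ univ.erase k, (w l - z i) / (w l - w k)) - z i)
      = -(z i * ((∏ j ∈ univ.erase i, (X - C (z j)) : Polynomial ℂ).eval (z i)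
            + z i * (derivative (∏ j ∈ univ.erase i, (X - C (z j)) : Polynomial ℂ)).eval (z i))
          / (∏ j ∈ univ.erase i, (X - C (z j)) : Polynomial ℂ).eval (z i)) := by
  set a := z i with ha
  set S : Polynomial ℂ := ∏ j ∈ univ.erase i, (X - C (z j)) with hSdef
  have hSeval : ∀ x : ℂ, S.eval x = ∏ j ∈ univ.erase i, (x - z j) := by
    intro x; rw [hSdef, Polynomial.eval_prod]; exact Finset.prod_congr rfl fun j _ => by simp
  have hSa : S.eval a ≠ 0 := by
    rw [hSeval]
    refine Finset.prod_ne_zero_iff.mpr fun j hj => sub_ne_zero.mpr ?_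
    exact fun hc => (Finset.ne_of_mem_erase hj) (hz hc.symm)
  obtain ⟨Np, hNpdef⟩ : ∃ Np : Polynomial ℂ, Np = X * S := ⟨_, rfl⟩
  obtain ⟨q, hq⟩ : ∃ q : Polynomial ℂ, q = (Np - C (Np.eval a)) /ₘ (X - C a) := ⟨_, rfl⟩
  have hfacN : Np - C (Np.eval a) = (X - C a) * q := by
    have h := Polynomial.modByMonic_add_div (Np - C (Np.eval a)) (X - C a)
    rw [Polynomial.modByMonic_X_sub_C_eq_C_eval, eval_sub, eval_C, sub_self, map_zero,
      zero_add, ← hq] at h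
    exact h.symm
  have hNa : Np.eval a = a * S.eval a := by rw [hNpdef, eval_mul, eval_X]
  have hNw : ∀ x : ℂ, Np.eval x = x * S.eval x := by
    intro x; rw [hNpdef, eval_mul, eval_X]
  have hqa : q.eval a = S.eval a + a * (derivative S).eval a := by
    have h1 := congrArg Polynomial.derivative hfacN
    rw [hNpdef] at h1
    simp only [derivative_sub, derivative_C, sub_zero, derivative_mul, derivative_X,
      one_mul] at h1
    have h2 := congrArg (Polynomial.eval a) h1
    simp only [eval_add, eval_mul, eval_X, eval_sub, eval_C, sub_self, zero_mul,
      add_zero] at h2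
    exact h2.symm
  have hqdeg : q.degree < (M₂ : WithBot ℕ) := by
    have hnd : q.natDegree ≤ M₁ - 1 := by
      rw [hq, Polynomial.natDegree_divByMonic _ (monic_X_sub_C a), natDegree_X_sub_C]
      have hS1 : S.natDegree ≤ M₁ - 1 := by
        rw [hSdef]
        refine le_trans (Polynomial.natDegree_prod_le _ _) ?_
        have hb : ∀ j ∈ univ.erase i, (X - C (z j)).natDegree ≤ 1 :=
          fun j _ => le_of_eq (natDegree_X_sub_C (z j))
        refine le_trans (Finset.sum_le_sum hb) ?_
        rw [Finset.sum_const, smul_eq_mul, mul_one, Finset.card_erase_of_mem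
          (mem_univ i), card_univ, Fintype.card_fin]
      have h1 : Np.natDegree ≤ M₁ := by
        rw [hNpdef]
        refine le_trans (Polynomial.natDegree_mul_le) ?_
        rw [natDegree_X]
        omega
      have h2 : (Np - C (Np.eval a)).natDegree ≤ M₁ :=
        le_trans (Polynomial.natDegree_sub_le _ _) (by simp [h1])
      omega
    refine lt_of_le_of_lt (Polynomial.degree_le_natDegree) ?_
    exact_mod_cast lt_of_le_of_lt (Nat.cast_le.mpr hnd)
      (Nat.cast_lt.mpr (by omega) : ((M₁ - 1 : ℕ) : ℤ) < (M₂ : ℤ))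
  have haw : ∀ k, a - w k ≠ 0 := fun k => sub_ne_zero.mpr (hzw i k)
  have term_eq : ∀ k : Fin M₂,
      a / (a - w k) *
        (w k * (∏ j ∈ univ.erase i, (z j - w k) / (z j - a)) *
            (∏ l ∈ univ.erase k, (w l - a) / (w l - w k)) - a)
      = a ^ 2 * (((∏ l ∈ univ.erase k, ((a - w l) / (w k - w l))) - 1) / (a - w k))
        - (a / S.eval a) * (q.eval (w k) * ∏ l ∈ univ.erase k, ((a - w l) / (w k - w l))) := by
    intro k
    have hwprod : (∏ l ∈ univ.erase k, (w k - w l)) ≠ 0 := by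
      refine Finset.prod_ne_zero_iff.mpr fun l hl => sub_ne_zero.mpr ?_
      exact fun hc => (Finset.ne_of_mem_erase hl) (hw hc.symm)
    have hB : (∏ l ∈ univ.erase k, (w l - a) / (w l - w k))
        = ∏ l ∈ univ.erase k, ((a - w l) / (w k - w l)) := by
      refine Finset.prod_congr rfl fun l _ => ?_
      rw [← neg_sub (w l) a, ← neg_sub (w l) (w k), neg_div_neg_eq]
    have hP1 : w k * (∏ j ∈ univ.erase i, (z j - w k) / (z j - a)) = Np.eval (w k) / S.eval a := by
      have h : (∏ j ∈ univ.erase i, (z j - w k) / (z j - a))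
          = (∏ j ∈ univ.erase i, (w k - z j)) / (∏ j ∈ univ.erase i, (a - z j)) := by
        rw [← Finset.prod_div_distrib]
        refine Finset.prod_congr rfl fun j _ => ?_
        rw [← neg_sub (z j) (w k), ← neg_sub (z j) a, neg_div_neg_eq]
      rw [h, hNw (w k), hSeval a, hSeval (w k)]
      ring
    have hNk : Np.eval (w k) = a * S.eval a + (w k - a) * q.eval (w k) := by
      have h1 := congrArg (Polynomial.eval (w k)) hfacN
      rw [eval_sub, eval_C, eval_mul, eval_sub, eval_X, eval_C, hNa] at h1
      linear_combination h1
    rw [hB, hP1, hNk]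
    exact key1_alg _ (q.eval (w k)) (S.eval a) a (w k) (haw k) hSa
  rw [Finset.sum_congr rfl fun k _ => term_eq k, Finset.sum_sub_distrib, ← Finset.mul_sum,
    lem2 hM₂ w hw a (hzw i), ← Finset.mul_sum, lagrange_sum hM₂ w hw q hqdeg a, hqa]
  field_simp
  ring

section Star
variable {M₁ : ℕ} (z : Fin M₁ → ℂ)

noncomputable def Ppoly : Polynomial ℂ := ∏ i : Fin M₁, (X - C (z i))

noncomputable def Gpoly : Polynomial ℂ :=
  C ((M₁ : ℂ) * (M₁ + 1) / 2) * Ppoly z - X * derivative (Ppoly z)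
    - C (2⁻¹ : ℂ) * (X * (X * derivative (derivative (Ppoly z))))

lemma coeffG (m : ℕ) :
    (Gpoly z).coeff m = ((M₁ : ℂ) * (M₁ + 1) / 2 - m * (m + 1) / 2) * (Ppoly z).coeff m := by
  rw [Gpoly, coeff_sub, coeff_sub, coeff_C_mul, coeff_C_mul]
  match m with
  | 0 =>
    rw [coeff_X_mul_zero, coeff_X_mul_zero]
    push_cast; ring
  | 1 =>
    rw [coeff_X_mul, coeff_X_mul, coeff_X_mul_zero, coeff_derivative]
    push_cast; ring
  | (m + 2) =>
    rw [coeff_X_mul, coeff_X_mul, coeff_X_mul, coeff_derivative, coeff_derivative,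
      coeff_derivative]
    push_cast; ring

lemma natDegree_P : (Ppoly z).natDegree = M₁ := by
  rw [Ppoly, ← Lagrange.nodal_eq, Lagrange.natDegree_nodal, card_univ, Fintype.card_fin]

lemma degreeG_lt (hM₁ : 0 < M₁) : (Gpoly z).degree < (M₁ : WithBot ℕ) := by
  rw [Polynomial.degree_lt_iff_coeff_zero]
  intro m hm
  rw [coeffG]
  rcases eq_or_lt_of_le hm with h | h
  · rw [← h]
    have : ((M₁ : ℂ) * (M₁ + 1) / 2 - (M₁ : ℂ) * ((M₁ : ℂ) + 1) / 2) = 0 := by ring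
    rw [this, zero_mul]
  · rw [Polynomial.coeff_eq_zero_of_natDegree_lt (by rw [natDegree_P]; exact_mod_cast h),
      mul_zero]

end Star

lemma star_eq {M₁ : ℕ} (z : Fin M₁ → ℂ) (hM₁ : 0 < M₁) (hz : Function.Injective z) :
    ∑ i : Fin M₁, C (-(z i * ((∏ j ∈ univ.erase i, (X - C (z j)) : Polynomial ℂ).eval (z i)
          + z i * (derivative (∏ j ∈ univ.erase i, (X - C (z j)) : Polynomial ℂ)).eval (z i))
        / (∏ j ∈ univ.erase i, (X - C (z j)) : Polynomial ℂ).eval (z i)))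
      * (∏ j ∈ univ.erase i, (X - C (z j)) : Polynomial ℂ)
    = Gpoly z := by
  have hSevalne : ∀ i : Fin M₁,
      (∏ j ∈ univ.erase i, (X - C (z j)) : Polynomial ℂ).eval (z i) ≠ 0 := by
    intro i
    rw [Polynomial.eval_prod]
    refine Finset.prod_ne_zero_iff.mpr fun j hj => ?_
    rw [eval_sub, eval_X, eval_C]
    exact sub_ne_zero.mpr fun hc => (Finset.ne_of_mem_erase hj) (hz hc.symm)
  have hcard : (univ.image z).card = M₁ := by
    rw [Finset.card_image_of_injective _ hz, card_univ, Fintype.card_fin]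
  apply Polynomial.eq_of_degrees_lt_of_eval_finset_eq (univ.image z)
  · rw [hcard]
    refine lt_of_le_of_lt (Polynomial.degree_sum_le _ _) ?_
    rw [Finset.sup_lt_iff (by exact_mod_cast WithBot.bot_lt_coe M₁)]
    intro i _
    refine lt_of_le_of_lt (Polynomial.degree_mul_le _ _) ?_
    have h2 : ((∏ j ∈ univ.erase i, (X - C (z j)) : Polynomial ℂ)).degree
        = ((M₁ - 1 : ℕ) : WithBot ℕ) := by
      rw [← Lagrange.nodal_eq, Lagrange.degree_nodal, Finset.card_erase_of_mem (mem_univ i),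
        card_univ, Fintype.card_fin]
    calc (C _).degree + _ ≤ 0 + ((M₁ - 1 : ℕ) : WithBot ℕ) :=
          add_le_add degree_C_le (le_of_eq h2)
      _ = ((M₁ - 1 : ℕ) : WithBot ℕ) := zero_add _
      _ < (M₁ : WithBot ℕ) := by exact_mod_cast Nat.cast_lt.mpr (Nat.sub_lt hM₁ one_pos)
  · rw [hcard]; exact degreeG_lt z hM₁
  · intro x hx
    obtain ⟨r, _, rfl⟩ := Finset.mem_image.mp hx
    rw [Polynomial.eval_finset_sum]
    rw [Finset.sum_eq_single r ?side1 ?side2]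
    case side1 =>
      intro i _ hir
      rw [eval_mul]
      have hr : (r : Fin M₁) ∈ univ.erase i :=
        Finset.mem_erase.mpr ⟨fun h => hir h.symm, mem_univ r⟩
      refine mul_eq_zero_of_right _ ?_
      rw [Polynomial.eval_prod]
      exact Finset.prod_eq_zero hr (by rw [eval_sub, eval_X, eval_C, sub_self])
    case side2 => intro h; exact absurd (mem_univ r) h
    set Sr : Polynomial ℂ := ∏ j ∈ univ.erase r, (X - C (z j)) with hSr
    have hP : Ppoly z = (X - C (z r)) * Sr := by
      rw [Ppoly, ← Finset.mul_prod_erase _ _ (mem_univ r)]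
    have hP' : derivative (Ppoly z) = Sr + (X - C (z r)) * derivative Sr := by
      rw [hP, derivative_mul, derivative_sub, derivative_X, derivative_C, sub_zero, one_mul]
    have hP'' : derivative (derivative (Ppoly z))
        = derivative Sr + (derivative Sr + (X - C (z r)) * derivative (derivative Sr)) := by
      rw [hP', derivative_add, derivative_mul, derivative_sub, derivative_X, derivative_C,
        sub_zero, one_mul]
    rw [eval_mul, eval_C, Gpoly, hP'', hP', hP]
    simp only [eval_mul, eval_add, eval_sub, eval_X, eval_C, sub_self, zero_mul, mul_zero,
      zero_add, add_zero]
    have hS0 : eval (z r) Sr ≠ 0 := by rw [hSr]; exact hSevalne r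
    rw [neg_mul, div_mul_cancel₀ _ hS0]
    ring

theorem stmt2 (N M₁ M₂ : ℕ) (hN : 0 < N) (hM₁ : 0 < M₁) (hM₂ : 0 < M₂)
    (h12 : M₁ ≤ M₂) (hMN : M₁ < N) (n : ℕ) (hn : n ≤ M₁)
    (z : Fin M₁ → ℂ) (hz : Function.Injective z)
    (w : Fin M₂ → ℂ) (hw : Function.Injective w)
    (hzw : ∀ i k, z i ≠ w k) :
    (∑ i : Fin M₁, ∑ k : Fin M₂,
      z i / (z i - w k) *
        (w k * (∏ j ∈ univ.erase i, (z j - w k) / (z j - z i)) *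
            (∏ l ∈ univ.erase k, (w l - z i) / (w l - w k)) - z i) *
        ∑ γ : Fin N, (starRingEnd ℂ) (η N γ) ^ n * ∏ j ∈ univ.erase i, (η N γ - z j))
    = (-(n : ℂ) * (n + 1) / 2 + (M₁ : ℂ) * (M₁ + 1) / 2) *
        ∑ γ : Fin N, (starRingEnd ℂ) (η N γ) ^ n * ∏ i : Fin M₁, (η N γ - z i) := by
  have hnN : n < N := lt_of_le_of_lt hn hMN
  have hPdeg : (Ppoly z).natDegree < N := by rw [natDegree_P]; exact hMN
  have hGdeg : (Gpoly z).natDegree < N := by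
    rcases eq_or_ne (Gpoly z) 0 with h0 | h0
    · rw [h0, natDegree_zero]; exact hN
    · exact lt_trans ((natDegree_lt_iff_degree_lt h0).mpr (by exact_mod_cast degreeG_lt z hM₁))
        hMN
  calc (∑ i : Fin M₁, ∑ k : Fin M₂,
      z i / (z i - w k) *
        (w k * (∏ j ∈ univ.erase i, (z j - w k) / (z j - z i)) *
            (∏ l ∈ univ.erase k, (w l - z i) / (w l - w k)) - z i) *
        ∑ γ : Fin N, (starRingEnd ℂ) (η N γ) ^ n * ∏ j ∈ univ.erase i, (η N γ - z j))
      = ∑ i : Fin M₁,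
          (-(z i * ((∏ j ∈ univ.erase i, (X - C (z j)) : Polynomial ℂ).eval (z i)
            + z i * (derivative (∏ j ∈ univ.erase i, (X - C (z j)) : Polynomial ℂ)).eval (z i))
          / (∏ j ∈ univ.erase i, (X - C (z j)) : Polynomial ℂ).eval (z i)))
          * ∑ γ : Fin N, (starRingEnd ℂ) (η N γ) ^ n * ∏ j ∈ univ.erase i, (η N γ - z j) := by
        refine Finset.sum_congr rfl fun i _ => ?_
        rw [← Finset.sum_mul, key1 hM₁ hM₂ h12 z hz w hw hzw i]
    _ = ∑ γ : Fin N, (starRingEnd ℂ) (η N γ) ^ n * (Gpoly z).eval (η N γ) := by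
        simp_rw [Finset.mul_sum]
        rw [Finset.sum_comm]
        refine Finset.sum_congr rfl fun γ _ => ?_
        rw [← star_eq z hM₁ hz, Polynomial.eval_finset_sum, Finset.mul_sum]
        refine Finset.sum_congr rfl fun i _ => ?_
        rw [eval_mul, eval_C]
        have he : eval (η N γ) (∏ j ∈ univ.erase i, (X - C (z j)) : Polynomial ℂ)
            = ∏ j ∈ univ.erase i, (η N γ - z j) := by
          rw [Polynomial.eval_prod]
          exact Finset.prod_congr rfl fun j _ => by simp
        rw [he]
        ring
    _ = (N : ℂ) * (Gpoly z).coeff n := proj N hN n hnN _ hGdeg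
    _ = (-(n : ℂ) * (n + 1) / 2 + (M₁ : ℂ) * (M₁ + 1) / 2) * ((N : ℂ) * (Ppoly z).coeff n) := by
        rw [coeffG]; push_cast; ring
    _ = (-(n : ℂ) * (n + 1) / 2 + (M₁ : ℂ) * (M₁ + 1) / 2) *
        ∑ γ : Fin N, (starRingEnd ℂ) (η N γ) ^ n * ∏ i : Fin M₁, (η N γ - z i) := by
        rw [← proj N hN n hnN _ hPdeg]
        congr 1
        refine Finset.sum_congr rfl fun γ _ => ?_
        rw [Ppoly, Polynomial.eval_prod]
        simp only [eval_sub, eval_X, eval_C]
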